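/- Let H be a complex Hilbert space, (k_n)_{n≥1} a sequence of nonzero vectors in H, and 0 < λ_n < 2 for all n. Fix f* ∈ H and set y_n := ⟨k_n, f*⟩. Define f_0 := 0 and recursively f_n := f_{n−1} + λ_n (y_n − ⟨k_n, f_{n−1}⟩) k_n/‖k_n‖². Then for every N ≥ 1, ‖f* − f_N‖² = ‖f*‖² − ∑_{n=1}^N λ_n(2−λ_n) |y_n − ⟨k_n, f_{n−1}⟩|² / ‖k_n‖²; in particular ∑_{n=1}^∞ λ_n(2−λ_n) |y_n − ⟨k_n, f_{n−1}⟩|² / ‖k_n‖² ≤ ‖f*‖². -/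

import Mathlib

/-- **Exact energy balance for the λₙ-relaxed Kaczmarz interpolation update
(Theorem 3.1).**  `k n` plays the role of the kernel section `k_{x_{n+1}}`
(a nonzero vector of `H`), `lam n` of `λ_{n+1}`, `y n = ⟨kₙ, f*⟩` is the data,
and `f` is the relaxed Kaczmarz recursion started at `f 0 = 0`.  Then
`‖f* - f_N‖² = ‖f*‖² - ∑_{n=1}^N λₙ(2-λₙ)|yₙ - ⟨kₙ, f_{n-1}⟩|²/‖kₙ‖²`, and in
particular the full series of weighted squared residuals is bounded by `‖f*‖²`. -/
lemma kacz_step {H : Type*} [NormedAddCommGroup H] [InnerProductSpace ℂ H]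
    (e kk : H) (hk : kk ≠ 0) (lam : ℝ) :
    ‖e - (((lam : ℂ) * (inner ℂ kk e : ℂ) / ((‖kk‖ : ℂ) ^ 2)) • kk)‖ ^ 2
      = ‖e‖ ^ 2 - lam * (2 - lam) * ‖(inner ℂ kk e : ℂ)‖ ^ 2 / ‖kk‖ ^ 2 := by
  have hK : (0:ℝ) < ‖kk‖ := norm_pos_iff.mpr hk
  set r : ℂ := inner ℂ kk e with hr
  set c : ℂ := (lam : ℂ) * r / ((‖kk‖ : ℂ) ^ 2) with hc
  have h1 : ‖e - c • kk‖ ^ 2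
      = ‖e‖ ^ 2 - 2 * Complex.re (inner ℂ e (c • kk) : ℂ) + ‖c • kk‖ ^ 2 := by
    exact_mod_cast norm_sub_sq (𝕜 := ℂ) e (c • kk)
  have h2 : (inner ℂ e (c • kk) : ℂ) = c * (starRingEnd ℂ) r := by
    rw [inner_smul_right]
    congr 1
    exact (inner_conj_symm e kk).symm
  have hrr : r * (starRingEnd ℂ) r = ((‖r‖ ^ 2 : ℝ) : ℂ) := by
    rw [RCLike.mul_conj]; norm_cast
  have h3 : c * (starRingEnd ℂ) r = ((lam * ‖r‖ ^ 2 / ‖kk‖ ^ 2 : ℝ) : ℂ) := by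
    rw [hc, div_mul_eq_mul_div, mul_assoc, hrr]
    push_cast
    ring
  have h4 : ‖c • kk‖ ^ 2 = lam ^ 2 * ‖r‖ ^ 2 / ‖kk‖ ^ 2 := by
    rw [norm_smul]
    have hcn : ‖c‖ = |lam| * ‖r‖ / ‖kk‖ ^ 2 := by
      rw [hc, norm_div, norm_mul]
      simp [abs_of_pos hK]
    rw [hcn]
    rw [div_mul_eq_mul_div, div_pow, mul_pow, mul_pow, sq_abs]
    field_simp
  rw [h1, h2, h3, h4, Complex.ofReal_re]
  field_simp
  ring

theorem kaczmarz_interpolation_energy_balance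
    {H : Type*} [NormedAddCommGroup H] [InnerProductSpace ℂ H] [CompleteSpace H]
    (k : ℕ → H) (hk : ∀ n, k n ≠ 0)
    (lam : ℕ → ℝ) (hlam0 : ∀ n, 0 < lam n) (hlam2 : ∀ n, lam n < 2)
    (fstar : H) (y : ℕ → ℂ) (hy : ∀ n, y n = inner ℂ (k n) fstar)
    (f : ℕ → H) (hf0 : f 0 = 0)
    (hfrec : ∀ n, f (n + 1) = f n
      + (((lam n : ℂ) * (y n - inner ℂ (k n) (f n)) / ((‖k n‖ : ℂ) ^ 2)) • k n)) :
    (∀ N : ℕ, 1 ≤ N →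
      ‖fstar - f N‖ ^ 2 = ‖fstar‖ ^ 2
        - ∑ n ∈ Finset.range N,
            lam n * (2 - lam n) * ‖y n - (inner ℂ (k n) (f n) : ℂ)‖ ^ 2 / ‖k n‖ ^ 2)
    ∧ (∑' n : ℕ,
        lam n * (2 - lam n) * ‖y n - (inner ℂ (k n) (f n) : ℂ)‖ ^ 2 / ‖k n‖ ^ 2)
        ≤ ‖fstar‖ ^ 2 := by
  have hres : ∀ n, y n - (inner ℂ (k n) (f n) : ℂ) = inner ℂ (k n) (fstar - f n) := by
    intro n
    rw [hy n, inner_sub_right]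
  have hstep : ∀ n, ‖fstar - f (n + 1)‖ ^ 2 = ‖fstar - f n‖ ^ 2
      - lam n * (2 - lam n) * ‖y n - (inner ℂ (k n) (f n) : ℂ)‖ ^ 2 / ‖k n‖ ^ 2 := by
    intro n
    have h : fstar - f (n + 1)
        = (fstar - f n) - (((lam n : ℂ) * (inner ℂ (k n) (fstar - f n) : ℂ)
            / ((‖k n‖ : ℂ) ^ 2)) • k n) := by
      rw [hfrec n, hres n]
      abel
    rw [h, kacz_step (fstar - f n) (k n) (hk n) (lam n), hres n]
  have hmain : ∀ N : ℕ, ‖fstar - f N‖ ^ 2 = ‖fstar‖ ^ 2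
      - ∑ n ∈ Finset.range N,
          lam n * (2 - lam n) * ‖y n - (inner ℂ (k n) (f n) : ℂ)‖ ^ 2 / ‖k n‖ ^ 2 := by
    intro N
    induction N with
    | zero => simp [hf0]
    | succ N ih =>
        rw [Finset.sum_range_succ, hstep N, ih]
        ring
  refine ⟨fun N _ => hmain N, ?_⟩
  apply Real.tsum_le_of_sum_range_le
  · intro n
    have h1 : 0 < lam n * (2 - lam n) := by nlinarith [hlam0 n, hlam2 n]
    positivity
  · intro N
    have := hmain N
    nlinarith [sq_nonneg ‖fstar - f N‖]
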